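/- Let f : ℝⁿ → ℝ be ℓ-strongly convex and differentiable with gradient norm bounded by G > 0 on a convex set S (i.e., ‖∇f(x)‖ ≤ G for all x ∈ S). Then f is α-exp-concave on S with α = ℓ/G², i.e., the function x ↦ exp(-(ℓ/G²)·f(x)) is concave on S. -/

import Mathlib

lemma exp_aux (t p : ℝ) (hp0 : 0 ≤ p) (hl : -p ≤ t) (hu : t ≤ p - p^2) :
    Real.exp (-(t + p^2/2)) ≤ 1 - t := by
  set s := t + p^2/2 with hs
  have hq1 : s ≤ p - p^2/2 := by simp only [hs]; nlinarith
  have hq2 : -(p - p^2/2) ≤ s := by simp only [hs]; nlinarith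
  have hps : p - p^2/2 ≤ 1/2 := by nlinarith [sq_nonneg (p-1)]
  have habs : |s| ≤ p - p^2/2 := abs_le.2 ⟨hq2, hq1⟩
  have h1 : |(-s)| ≤ 1 := by rw [abs_neg]; linarith
  have hb := Real.exp_bound h1 (n := 3) (by norm_num)
  have hsum : ∑ m ∈ Finset.range 3, (-s) ^ m / (m.factorial : ℝ) = 1 - s + s^2/2 := by
    simp [Finset.sum_range_succ]
    ring
  rw [hsum] at hb
  have hb2 : Real.exp (-s) ≤ 1 - s + s^2/2 + |s|^3 * (2/9) := by
    have := abs_le.1 hb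
    have h3 : |(-s)| ^ 3 * ((3:ℕ).succ / ((3:ℕ).factorial * 3) : ℝ) = |s|^3 * (2/9) := by
      rw [abs_neg]; norm_num [Nat.factorial]
    linarith [this.2, h3.le, h3.ge]
  have hq0 : (0:ℝ) ≤ |s| := abs_nonneg s
  have hsq : s^2 = |s|^2 := (sq_abs s).symm
  have key : s^2/2 + |s|^3 * (2/9) ≤ p^2/2 := by
    nlinarith [sq_nonneg (|s| - (p - p^2/2)), mul_nonneg hq0 hq0,
      mul_le_mul_of_nonneg_left habs (mul_nonneg hq0 hq0),
      sq_nonneg (2 - p), mul_nonneg (mul_nonneg hp0 hp0) hp0]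
  have hfin : Real.exp (-s) ≤ 1 - t := by
    have he : (1:ℝ) - s + p^2/2 = 1 - t := by simp [hs]; ring
    linarith
  simpa using hfin

lemma step_lemma {n : ℕ} {S : Set (EuclideanSpace ℝ (Fin n))}
    (f : EuclideanSpace ℝ (Fin n) → ℝ)
    (f' : EuclideanSpace ℝ (Fin n) → EuclideanSpace ℝ (Fin n))
    (ℓ G : ℝ) (hℓ : 0 < ℓ) (hG : 0 < G)
    (hsc : ∀ x ∈ S, ∀ y ∈ S,
      f y ≥ f x + (inner ℝ (f' x) (y - x) : ℝ) + ℓ / 2 * ‖y - x‖ ^ 2)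
    (hgrad : ∀ x ∈ S, ‖f' x‖ ≤ G)
    {x z : EuclideanSpace ℝ (Fin n)} (hx : x ∈ S) (hz : z ∈ S) :
    Real.exp (-(ℓ / G ^ 2) * f x) ≤ Real.exp (-(ℓ / G ^ 2) * f z) *
      (1 - (ℓ / G ^ 2) * (inner ℝ (f' z) (x - z) : ℝ)) := by
  set α : ℝ := ℓ / G ^ 2 with hα
  set r : ℝ := ‖x - z‖ with hr
  set u : ℝ := (inner ℝ (f' z) (x - z) : ℝ) with huu
  set p : ℝ := ℓ * r / G with hp
  set t : ℝ := α * u with ht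
  have hr0 : 0 ≤ r := norm_nonneg _
  have hα0 : 0 < α := by positivity
  have hp0 : 0 ≤ p := by positivity
  -- Cauchy-Schwarz bounds
  have hcs : |u| ≤ G * r := by
    calc |u| ≤ ‖f' z‖ * ‖x - z‖ := abs_real_inner_le_norm _ _
    _ ≤ G * r := by
        apply mul_le_mul_of_nonneg_right (hgrad z hz) hr0
  have hcs2 : |(inner ℝ (f' x) (x - z) : ℝ)| ≤ G * r := by
    calc |(inner ℝ (f' x) (x - z) : ℝ)| ≤ ‖f' x‖ * ‖x - z‖ := abs_real_inner_le_norm _ _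
    _ ≤ G * r := mul_le_mul_of_nonneg_right (hgrad x hx) hr0
  -- lower bound on t
  have hlb : -p ≤ t := by
    have : -(G * r) ≤ u := (abs_le.1 hcs).1
    have h2 : α * (-(G * r)) ≤ α * u := by
      apply mul_le_mul_of_nonneg_left this hα0.le
    have he : α * (-(G * r)) = -p := by
      rw [hα, hp]; field_simp
    rw [ht]; rw [he] at h2; exact h2
  -- strong monotonicity: u ≤ G r - ℓ r²
  have h1 := hsc z hz x hx
  have h2 := hsc x hx z hz
  have hnorm : ‖z - x‖ = r := by rw [hr, norm_sub_rev]
  have hinner2 : (inner ℝ (f' x) (z - x) : ℝ) = -(inner ℝ (f' x) (x - z) : ℝ) := by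
    have : z - x = -(x - z) := by abel
    rw [this, inner_neg_right]
  have hub0 : u ≤ G * r - ℓ * r ^ 2 := by
    rw [hnorm] at h2
    have h3 : (inner ℝ (f' x) (x - z) : ℝ) ≤ G * r := (abs_le.1 hcs2).2
    rw [hinner2] at h2
    linarith
  have hub : t ≤ p - p ^ 2 := by
    have h4 : α * u ≤ α * (G * r - ℓ * r ^ 2) := mul_le_mul_of_nonneg_left hub0 hα0.le
    have he : α * (G * r - ℓ * r ^ 2) = p - p ^ 2 := by
      rw [hα, hp]; field_simp
    rw [ht]; linarith [he ▸ h4]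
  -- exponent identity
  have hc : α * (ℓ / 2 * r ^ 2) = p ^ 2 / 2 := by
    field_simp [hα, hp]
    ring
  -- from strong convexity at (z, x)
  have hfx : -α * f x ≤ -α * f z + -(t + p ^ 2 / 2) := by
    have h5 : f x ≥ f z + u + ℓ / 2 * r ^ 2 := h1
    have h6 : α * (f z + u + ℓ / 2 * r ^ 2) ≤ α * f x := mul_le_mul_of_nonneg_left h5 hα0.le
    have : α * f z + t + p ^ 2 / 2 ≤ α * f x := by
      rw [ht]; nlinarith [hc]
    linarith
  calc Real.exp (-α * f x) ≤ Real.exp (-α * f z + -(t + p ^ 2 / 2)) := Real.exp_le_exp.2 hfx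
    _ = Real.exp (-α * f z) * Real.exp (-(t + p ^ 2 / 2)) := Real.exp_add _ _
    _ ≤ Real.exp (-α * f z) * (1 - t) := by
        apply mul_le_mul_of_nonneg_left (exp_aux t p hp0 hlb hub) (Real.exp_nonneg _)
    _ = Real.exp (-α * f z) * (1 - α * u) := by rw [ht]

theorem strongly_convex_is_exp_concave {n : ℕ}
    (S : Set (EuclideanSpace ℝ (Fin n))) (hS : Convex ℝ S)
    (f : EuclideanSpace ℝ (Fin n) → ℝ)
    (f' : EuclideanSpace ℝ (Fin n) → EuclideanSpace ℝ (Fin n))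
    (ℓ G : ℝ) (hℓ : 0 < ℓ) (hG : 0 < G)
    (hdiff : ∀ x, HasGradientAt f (f' x) x)
    (hsc : ∀ x ∈ S, ∀ y ∈ S,
      f y ≥ f x + (inner ℝ (f' x) (y - x) : ℝ) + ℓ / 2 * ‖y - x‖ ^ 2)
    (hgrad : ∀ x ∈ S, ‖f' x‖ ≤ G) :
    ConcaveOn ℝ S (fun x => Real.exp (-(ℓ / G ^ 2) * f x)) := by
  refine ⟨hS, ?_⟩
  intro x hx y hy a b ha hb hab
  simp only [smul_eq_mul]
  set z := a • x + b • y with hzdef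
  have hz : z ∈ S := hS hx hy ha hb hab
  have h1 := step_lemma f f' ℓ G hℓ hG hsc hgrad hx hz
  have h2 := step_lemma f f' ℓ G hℓ hG hsc hgrad hy hz
  set α : ℝ := ℓ / G ^ 2 with hα
  set E : ℝ := Real.exp (-α * f z) with hE
  set u1 : ℝ := (inner ℝ (f' z) (x - z) : ℝ) with hu1
  set u2 : ℝ := (inner ℝ (f' z) (y - z) : ℝ) with hu2
  have hzero : a • (x - z) + b • (y - z) = (0 : EuclideanSpace ℝ (Fin n)) := by
    have h : a • (x - z) + b • (y - z) = a • x + b • y - (a + b) • z := by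
      module
    rw [h, hab, one_smul, hzdef, sub_self]
  have hinner : a * u1 + b * u2 = 0 := by
    have h : (inner ℝ (f' z) (a • (x - z) + b • (y - z)) : ℝ) = 0 := by
      rw [hzero, inner_zero_right]
    rw [inner_add_right, real_inner_smul_right, real_inner_smul_right] at h
    exact h
  have e1 : a * Real.exp (-α * f x) ≤ a * (E * (1 - α * u1)) :=
    mul_le_mul_of_nonneg_left h1 ha
  have e2 : b * Real.exp (-α * f y) ≤ b * (E * (1 - α * u2)) :=
    mul_le_mul_of_nonneg_left h2 hb
  have heq : a * (E * (1 - α * u1)) + b * (E * (1 - α * u2)) = E := by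
    linear_combination E * hab - E * α * hinner
  linarith
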